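/- (Theorem 3.) For every real q with 0 < q < 1, integers α ≥ 1 and n ≥ 0, every real x ≥ 0, every odd positive integer d and Dirichlet character χ modulo d, Ẽ^χ_{n,q}(x|α) = Σ_{k=0}^{n} C(n,k) q^{α k x} Ẽ^χ_{k,q}(α) [x:q^α]^{n−k}. -/

import Mathlib

open scoped BigOperators

/-- `[x:q] = (q^x - 1)/(q - 1)` with real exponentiation. -/
noncomputable def qNum (q x : ℝ) : ℝ := (q ^ x - 1) / (q - 1)

/-- Dirichlet-type weighted `q`-Euler polynomial
`Ẽ^χ_{n,q}(x|α) = [2:q] ∑_{m≥0} q^m χ(m) (-1)^m [x+m:q^α]^n`. -/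
noncomputable def qEulerChi (q : ℝ) (d : ℕ) (χ : DirichletCharacter ℂ d) (α n : ℕ)
    (x : ℝ) : ℂ :=
  (qNum q 2 : ℂ) *
    ∑' m : ℕ, (q : ℂ) ^ m * χ (m : ZMod d) * (-1 : ℂ) ^ m *
      ((qNum (q ^ α) (x + (m : ℝ)) : ℝ) : ℂ) ^ n

theorem statement8 (q : ℝ) (hq0 : 0 < q) (hq1 : q < 1)
    (α : ℕ) (hα : 1 ≤ α) (n : ℕ) (x : ℝ) (hx : 0 ≤ x)
    (d : ℕ) (hd0 : 0 < d) (hdo : Odd d) (χ : DirichletCharacter ℂ d) :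
    qEulerChi q d χ α n x =
      ∑ k ∈ Finset.range (n + 1),
        (n.choose k : ℂ) * ((q ^ ((↑(α * k) : ℝ) * x) : ℝ) : ℂ) * qEulerChi q d χ α k 0 *
          ((qNum (q ^ α) x : ℝ) : ℂ) ^ (n - k) := by
  set Q : ℝ := q ^ α with hQdef
  have hQ0 : (0:ℝ) < Q := pow_pos hq0 α
  have hQ1 : Q < 1 := pow_lt_one₀ hq0.le hq1 (by omega)
  have hQne : Q - 1 ≠ 0 := sub_ne_zero.mpr (ne_of_lt hQ1)
  -- bounds on qNum Q m for natural m
  have hnum_abs : ∀ m : ℕ, |qNum Q (m:ℝ)| ≤ 1 / (1 - Q) := by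
    intro m
    have hQm : Q ^ m ≤ 1 := pow_le_one₀ hQ0.le hQ1.le
    have hQm0 : 0 < Q ^ m := pow_pos hQ0 m
    have : qNum Q (m:ℝ) = (1 - Q ^ m) / (1 - Q) := by
      unfold qNum
      rw [Real.rpow_natCast]
      rw [div_eq_div_iff hQne (by linarith)]
      ring
    rw [this, abs_of_nonneg (div_nonneg (by linarith) (by linarith))]
    gcongr
    · linarith
  -- summability
  have hsummable : ∀ k : ℕ, Summable (fun m : ℕ =>
      (q:ℂ)^m * χ (m : ZMod d) * (-1:ℂ)^m * ((qNum Q ((m:ℝ)) : ℝ):ℂ)^k) := by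
    intro k
    apply Summable.of_norm_bounded (g := fun m => (1/(1-Q))^k * q^m)
      ((summable_geometric_of_lt_one hq0.le hq1).mul_left _)
    intro m
    rw [norm_mul, norm_mul, norm_mul, norm_pow, norm_pow, norm_pow]
    have h1 : ‖(q:ℂ)‖ = q := by
      rw [Complex.norm_real, Real.norm_eq_abs, abs_of_pos hq0]
    have h2 : ‖χ (m : ZMod d)‖ ≤ 1 := DirichletCharacter.norm_le_one χ _
    have h3 : ‖(-1:ℂ)‖ = 1 := by simp
    have h4 : ‖((qNum Q (m:ℝ) : ℝ):ℂ)‖ ≤ 1/(1-Q) := by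
      rw [Complex.norm_real, Real.norm_eq_abs]; exact hnum_abs m
    have hq0' : (0:ℝ) ≤ q ^ m := by positivity
    rw [h1]
    calc q ^ m * ‖χ (m : ZMod d)‖ * ‖(-1:ℂ)‖^m * ‖((qNum Q (m:ℝ) : ℝ):ℂ)‖^k
        ≤ q ^ m * 1 * 1 * (1/(1-Q))^k := by
          rw [h3, one_pow]
          gcongr <;> first
            | (rw [Complex.norm_real, Real.norm_eq_abs]; exact abs_nonneg _)
            | exact h4
            | positivity
      _ = (1/(1-Q))^k * q^m := by ring
  -- splitting lemma
  have hsplit : ∀ m : ℕ, qNum Q (x + m) = Q ^ x * qNum Q (m:ℝ) + qNum Q x := by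
    intro m
    unfold qNum
    rw [Real.rpow_add hQ0]
    field_simp
    ring
  -- exponent identity
  have hQxk : ∀ k : ℕ, (Q ^ x)^k = q ^ ((↑(α * k) : ℝ) * x) := by
    intro k
    rw [hQdef, ← Real.rpow_natCast q α, ← Real.rpow_mul hq0.le,
      ← Real.rpow_natCast (q ^ ((α:ℝ) * x)) k, ← Real.rpow_mul hq0.le]
    congr 1
    push_cast
    ring
  -- rewrite each term of the tsum
  have hterm : ∀ m : ℕ, (q:ℂ)^m * χ (m : ZMod d) * (-1:ℂ)^m * ((qNum Q (x + m) : ℝ):ℂ)^n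
      = ∑ k ∈ Finset.range (n+1),
        ((((Q ^ x : ℝ)):ℂ)^k * ((qNum Q x : ℝ):ℂ)^(n-k) * (n.choose k : ℂ)) *
          ((q:ℂ)^m * χ (m : ZMod d) * (-1:ℂ)^m * ((qNum Q (m:ℝ) : ℝ):ℂ)^k) := by
    intro m
    rw [hsplit m]
    push_cast
    rw [add_pow, Finset.mul_sum]
    refine Finset.sum_congr rfl fun k _ => ?_
    ring
  -- main computation
  unfold qEulerChi
  rw [tsum_congr hterm,
    Summable.tsum_finsetSum (fun k _ => ((hsummable k).mul_left _)),
    Finset.mul_sum]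
  refine Finset.sum_congr rfl fun k _ => ?_
  rw [tsum_mul_left]
  have hz : (fun m : ℕ => (q:ℂ)^m * χ (m : ZMod d) * (-1:ℂ)^m *
      ((qNum Q ((0:ℝ) + m) : ℝ):ℂ)^k)
      = fun m : ℕ => (q:ℂ)^m * χ (m : ZMod d) * (-1:ℂ)^m * ((qNum Q (m:ℝ) : ℝ):ℂ)^k := by
    funext m; rw [zero_add]
  rw [hz]
  rw [← hQxk k]
  push_cast
  ring
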